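/- Let X be a T0 space. Then the topology S*(X) determined by the convergence class S*_X equals the topology S(X) determined by S_X, and both equal the directed-open topology D(X). -/

import Mathlib

namespace Conv

variable {X : Type}

/-- A directed preorder (index of a net), given as an explicit relation. -/
def DirIdx {I : Type} (r : I → I → Prop) : Prop :=
  Nonempty I ∧ (∀ i, r i i) ∧ (∀ a b c : I, r a b → r b c → r a c) ∧
    ∀ a b : I, ∃ c, r a c ∧ r b c

/-- Specialization order relative to a family `T` of "open" sets. -/
def sle (T : Set (Set X)) (x y : X) : Prop := ∀ U ∈ T, x ∈ U → y ∈ U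

/-- Upper closure of a set w.r.t. the specialization order of `T`. -/
def upset (T : Set (Set X)) (A : Set X) : Set X := {z | ∃ a ∈ A, sle T a z}

/-- `D` is a (nonempty) directed subset w.r.t. the specialization order of `T`. -/
def IsDirSet (T : Set (Set X)) (D : Set X) : Prop := D.Nonempty ∧ DirectedOn (sle T) D

/-- A subset `D` (viewed as a monotone net) converges to `x` w.r.t. `T`. -/
def DConv (T : Set (Set X)) (D : Set X) (x : X) : Prop :=
  ∀ U ∈ T, x ∈ U → (D ∩ U).Nonempty

/-- `U` is directed-open w.r.t. `T`. -/
def DirOpen (T : Set (Set X)) (U : Set X) : Prop :=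
  ∀ D x, IsDirSet T D → DConv T D x → x ∈ U → (D ∩ U).Nonempty

/-- The family of directed-open sets. -/
def DTop (T : Set (Set X)) : Set (Set X) := {U | DirOpen T U}

/-- The family of open sets of a topological space. -/
def opens (X : Type) [TopologicalSpace X] : Set (Set X) := {U | IsOpen U}

/-- Every directed-open set belongs to `T`. -/
def DirT (T : Set (Set X)) : Prop := ∀ U, DirOpen T U → U ∈ T

/-- A directed space: every directed-open set is open. -/
def IsDirectedSpace (X : Type) [TopologicalSpace X] : Prop := DirT (opens X)

/-- A net is eventually in `U`. -/
def EvIn {I : Type} (r : I → I → Prop) (xi : I → X) (U : Set X) : Prop :=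
  ∃ k, ∀ i, r k i → xi i ∈ U

/-- `y` is an eventual lower bound of the net `xi`. -/
def EvLB (T : Set (Set X)) {I : Type} (r : I → I → Prop) (xi : I → X) (y : X) : Prop :=
  ∃ k, ∀ i, r k i → sle T y (xi i)

/-- Topological convergence of a net w.r.t. the family `T` of open sets. -/
def NConv (T : Set (Set X)) {I : Type} (r : I → I → Prop) (xi : I → X) (x : X) : Prop :=
  ∀ U ∈ T, x ∈ U → EvIn r xi U

/-- `((x_i), x) ∈ S_X`: some directed set of eventual lower bounds converges to `x`. -/
def SConv (T : Set (Set X)) {I : Type} (r : I → I → Prop) (xi : I → X) (x : X) : Prop :=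
  ∃ D : Set X, IsDirSet T D ∧ (∀ d ∈ D, EvLB T r xi d) ∧ DConv T D x

/-- `U` is open in the topology determined by `S_X`. -/
def SOpen (T : Set (Set X)) (U : Set X) : Prop :=
  ∀ (I : Type) (r : I → I → Prop), DirIdx r → ∀ (xi : I → X) (x : X),
    SConv T r xi x → x ∈ U → EvIn r xi U

/-- `y ≪_d x`. -/
def WayBelow (T : Set (Set X)) (y x : X) : Prop :=
  ∀ D : Set X, IsDirSet T D → DConv T D x → ∃ d ∈ D, sle T y d

/-- A continuous space (relative to the family `T`). -/
def IsContinuousT (T : Set (Set X)) : Prop :=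
  DirT T ∧ ∀ x : X, IsDirSet T {y | WayBelow T y x} ∧ DConv T {y | WayBelow T y x} x

def IsContinuousSpace (X : Type) [TopologicalSpace X] : Prop := IsContinuousT (opens X)

/-- `G ≪_d H` for subsets. -/
def SWayBelow (T : Set (Set X)) (G H : Set X) : Prop :=
  ∀ (D : Set X) (x : X), IsDirSet T D → DConv T D x → x ∈ H → (D ∩ upset T G).Nonempty

/-- A directed family of finite sets (ordered by reverse inclusion of upper closures). -/
def IsDirFam (T : Set (Set X)) (F : Set (Set X)) : Prop :=
  F.Nonempty ∧ (∀ A ∈ F, A.Finite) ∧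
    ∀ A ∈ F, ∀ B ∈ F, ∃ C ∈ F, upset T C ⊆ upset T A ∧ upset T C ⊆ upset T B

/-- Convergence of a family of finite sets to `x`. -/
def FamConv (T : Set (Set X)) (F : Set (Set X)) (x : X) : Prop :=
  ∀ U ∈ T, x ∈ U → ∃ A ∈ F, upset T A ⊆ U

/-- `fin_d(x)`. -/
def finD (T : Set (Set X)) (x : X) : Set (Set X) := {A | A.Finite ∧ SWayBelow T A {x}}

def IsQuasicontinuousT (T : Set (Set X)) : Prop :=
  DirT T ∧ ∀ x : X, IsDirFam T (finD T x) ∧ FamConv T (finD T x) x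

def IsQuasicontinuousSpace (X : Type) [TopologicalSpace X] : Prop :=
  IsQuasicontinuousT (opens X)

/-- `A` is a quasi eventual lower bound of the net `xi`. -/
def QEvLB (T : Set (Set X)) {I : Type} (r : I → I → Prop) (xi : I → X) (A : Set X) : Prop :=
  A.Finite ∧ ∃ k, ∀ i, r k i → xi i ∈ upset T A

/-- `((x_i), x) ∈ S*_X`. -/
def QSConv (T : Set (Set X)) {I : Type} (r : I → I → Prop) (xi : I → X) (x : X) : Prop :=
  ∃ F : Set (Set X), IsDirFam T F ∧ (∀ A ∈ F, QEvLB T r xi A) ∧ FamConv T F x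

/-- `U` is open in the topology determined by `S*_X`. -/
def QSOpen (T : Set (Set X)) (U : Set X) : Prop :=
  ∀ (I : Type) (r : I → I → Prop), DirIdx r → ∀ (xi : I → X) (x : X),
    QSConv T r xi x → x ∈ U → EvIn r xi U

/-- `x ≡ liminf x_i`. -/
def IsLiminf (T : Set (Set X)) {I : Type} (r : I → I → Prop) (xi : I → X) (x : X) : Prop :=
  (∀ y, EvLB T r xi y → sle T y x) ∧
  (∀ z, (∀ y, EvLB T r xi y → sle T y z) → sle T x z) ∧
  SConv T r xi x

/-- `f : (J,s) → (I,r)` is a subnet map: monotone and cofinal, with directed domain. -/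
def Subnet {I J : Type} (r : I → I → Prop) (s : J → J → Prop) (f : J → I) : Prop :=
  DirIdx s ∧ (∀ a b, s a b → r (f a) (f b)) ∧ ∀ i, ∃ j, r i (f j)

/-- `z` is a cofinal lower bound of the net `xi`. -/
def CofLB (T : Set (Set X)) {I : Type} (r : I → I → Prop) (xi : I → X) (z : X) : Prop :=
  ∀ i, ∃ j, r i j ∧ sle T z (xi j)

/-- `((x_i), x) ∈ L_X`: every subnet has liminf `x`. -/
def LConv (T : Set (Set X)) {I : Type} (r : I → I → Prop) (xi : I → X) (x : X) : Prop :=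
  ∀ (J : Type) (s : J → J → Prop) (f : J → I), Subnet r s f →
    IsLiminf T s (fun j => xi (f j)) x

/-- `U` is open in the liminf topology `L(X)`. -/
def LOpen (T : Set (Set X)) (U : Set X) : Prop :=
  ∀ (I : Type) (r : I → I → Prop), DirIdx r → ∀ (xi : I → X) (x : X),
    LConv T r xi x → x ∈ U → EvIn r xi U

/-- `x ≡_q liminf x_i`. -/
def QLiminf (T : Set (Set X)) {I : Type} (r : I → I → Prop) (xi : I → X) (x : X) : Prop :=
  QSConv T r xi x ∧ ∀ y, EvLB T r xi y → sle T y x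

/-- `((x_i), x) ∈ L*_X`: every subnet quasi-liminf converges to `x`. -/
def QLConv (T : Set (Set X)) {I : Type} (r : I → I → Prop) (xi : I → X) (x : X) : Prop :=
  ∀ (J : Type) (s : J → J → Prop) (f : J → I), Subnet r s f →
    QLiminf T s (fun j => xi (f j)) x

/-- `U` is open in the quasi-liminf topology `L*(X)`. -/
def QLOpen (T : Set (Set X)) (U : Set X) : Prop :=
  ∀ (I : Type) (r : I → I → Prop), DirIdx r → ∀ (xi : I → X) (x : X),
    QLConv T r xi x → x ∈ U → EvIn r xi U

/-- The Lawson topology: generated by the opens of `X` and complements of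
principal upper sets. -/
def lawson (X : Type) [TopologicalSpace X] : Set (Set X) :=
  {U | (TopologicalSpace.generateFrom
      (opens X ∪ {V | ∃ y : X, V = {z : X | sle (opens X) y z}ᶜ})).IsOpen U}

section Aux

variable {X : Type}

lemma sle_refl (T : Set (Set X)) (x : X) : sle T x x := fun _ _ h => h

lemma sle_trans {T : Set (Set X)} {x y z : X} (h1 : sle T x y) (h2 : sle T y z) :
    sle T x z := fun U hU hx => h2 U hU (h1 U hU hx)

lemma chain_inter_finite {c : Set (Set X)} (hc : IsChain (· ⊆ ·) c) (hcne : c.Nonempty)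
    {A : Set X} (hA : A.Finite) (h : ∀ M ∈ c, (M ∩ A).Nonempty) :
    (⋂₀ c ∩ A).Nonempty := by
  have himg : ((fun M => M ∩ A) '' c).Finite := by
    apply Set.Finite.subset hA.finite_subsets
    rintro _ ⟨M, _, rfl⟩
    exact Set.inter_subset_right
  obtain ⟨M₁, hM₁c, hmin⟩ := Set.Finite.exists_minimalFor' (fun M => M ∩ A) c himg hcne
  obtain ⟨m, hmM₁, hmA⟩ := h M₁ hM₁c
  refine ⟨m, ?_, hmA⟩
  rintro M hMc
  rcases eq_or_ne M M₁ with rfl | hne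
  · exact hmM₁
  rcases hc.total hM₁c hMc with hsub | hsub
  · exact hsub hmM₁
  · have heq : M₁ ∩ A = M ∩ A := le_antisymm (hmin hMc (Set.inter_subset_inter_left A hsub))
        (Set.inter_subset_inter_left A hsub)
    have hm : m ∈ M ∩ A := by rw [← heq]; exact ⟨hmM₁, hmA⟩
    exact hm.1

/-- Rudin's Lemma for a preorder given by `sle T`. -/
lemma rudin (T : Set (Set X)) {G : Set (Set X)} (hGne : G.Nonempty)
    (hfin : ∀ A ∈ G, A.Finite) (hne : ∀ A ∈ G, A.Nonempty)
    (hdir : ∀ A ∈ G, ∀ B ∈ G, ∃ C ∈ G,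
      (∀ c ∈ C, ∃ a ∈ A, sle T a c) ∧ (∀ c ∈ C, ∃ b ∈ B, sle T b c)) :
    ∃ M : Set X, M ⊆ ⋃₀ G ∧ M.Nonempty ∧ DirectedOn (sle T) M ∧
      ∀ A ∈ G, (M ∩ A).Nonempty := by
  classical
  set N : Set (Set X) := {M | M ⊆ ⋃₀ G ∧ (∀ A ∈ G, (M ∩ A).Nonempty) ∧
    ∀ A ∈ G, ∀ B ∈ G, (∀ b ∈ B, ∃ a ∈ A, sle T a b) →
      ∀ m ∈ M ∩ B, ∃ a ∈ M ∩ A, sle T a m} with hN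
  have htop : ⋃₀ G ∈ N := by
    refine ⟨subset_rfl, fun A hA => ?_, ?_⟩
    · obtain ⟨a, ha⟩ := hne A hA
      exact ⟨a, ⟨A, hA, ha⟩, ha⟩
    · rintro A hA B hB hrel m ⟨-, hmB⟩
      obtain ⟨a, haA, hle⟩ := hrel m hmB
      exact ⟨a, ⟨⟨A, hA, haA⟩, haA⟩, hle⟩
  obtain ⟨M, -, hMN, hMmin⟩ : ∃ M, M ⊆ ⋃₀ G ∧ Minimal (· ∈ N) M := by
    apply zorn_superset_nonempty N ?_ _ htop
    intro c hcN hchain hcne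
    refine ⟨⋂₀ c, ⟨?_, fun A hA => ?_, ?_⟩, fun s hs => Set.sInter_subset_of_mem hs⟩
    · obtain ⟨M₀, hM₀⟩ := hcne
      exact (Set.sInter_subset_of_mem hM₀).trans (hcN hM₀).1
    · exact chain_inter_finite hchain hcne (hfin A hA)
        (fun M hM => (hcN hM).2.1 A hA)
    · rintro A hA B hB hrel m ⟨hmI, hmB⟩
      have : (⋂₀ c ∩ (A ∩ {a | sle T a m})).Nonempty := by
        apply chain_inter_finite hchain hcne ((hfin A hA).subset Set.inter_subset_left)
        intro M hM
        obtain ⟨a, ⟨haM, haA⟩, hale⟩ :=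
          (hcN hM).2.2 A hA B hB hrel m ⟨Set.sInter_subset_of_mem hM hmI, hmB⟩
        exact ⟨a, ⟨haM, haA, hale⟩⟩
      obtain ⟨a, haI, haA, hale⟩ := this
      exact ⟨a, ⟨haI, haA⟩, hale⟩
  obtain ⟨hMsub, hMint, hMrel⟩ := hMN
  -- key property
  have key : ∀ x ∈ M, ∃ F ∈ G, ∀ m ∈ M ∩ F, sle T x m := by
    intro x hx
    by_contra hcon
    push_neg at hcon
    have hNx : {m ∈ M | ¬ sle T x m} ∈ N := by
      refine ⟨fun m hm => hMsub hm.1, fun A hA => ?_, ?_⟩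
      · obtain ⟨m, hmMA, hmnot⟩ := hcon A hA
        exact ⟨m, ⟨hmMA.1, hmnot⟩, hmMA.2⟩
      · rintro A hA B hB hrel m ⟨⟨hmM, hmx⟩, hmB⟩
        obtain ⟨a, ⟨haM, haA⟩, hale⟩ := hMrel A hA B hB hrel m ⟨hmM, hmB⟩
        refine ⟨a, ⟨⟨haM, fun hxa => hmx (sle_trans hxa hale)⟩, haA⟩, hale⟩
    have : M ⊆ {m ∈ M | ¬ sle T x m} :=
      hMmin hNx (fun m hm => hm.1)
    exact (this hx).2 (sle_refl T x)
  refine ⟨M, hMsub, ?_, ?_, hMint⟩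
  · obtain ⟨A, hA⟩ := hGne
    exact ((hMint A hA).mono Set.inter_subset_left)
  · intro x hx y hy
    obtain ⟨Fx, hFx, hkx⟩ := key x hx
    obtain ⟨Fy, hFy, hky⟩ := key y hy
    obtain ⟨C, hC, hCx, hCy⟩ := hdir Fx hFx Fy hFy
    obtain ⟨cm, hcmM, hcmC⟩ := hMint C hC
    obtain ⟨a, haMFx, hale⟩ := hMrel Fx hFx C hC hCx cm ⟨hcmM, hcmC⟩
    obtain ⟨b, hbMFy, hble⟩ := hMrel Fy hFy C hC hCy cm ⟨hcmM, hcmC⟩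
    exact ⟨cm, hcmM, sle_trans (hkx a haMFx) hale, sle_trans (hky b hbMFy) hble⟩

lemma dirOpen_upper {T : Set (Set X)} {U : Set X} (hU : DirOpen T U) {d z : X}
    (hd : d ∈ U) (hz : sle T d z) : z ∈ U := by
  have hdirset : IsDirSet T ({z} : Set X) := by
    refine ⟨⟨z, rfl⟩, ?_⟩
    rintro a ha b hb
    cases ha
    cases hb
    exact ⟨z, rfl, sle_refl T z, sle_refl T z⟩
  have hconv : DConv T ({z} : Set X) d := fun V hV hdV => ⟨z, rfl, hz V hV hdV⟩
  obtain ⟨w, hw, hwU⟩ := hU {z} d hdirset hconv hd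
  cases hw
  exact hwU

lemma qsOpen_sOpen {T : Set (Set X)} {U : Set X} (h : QSOpen T U) : SOpen T U := by
  intro I r hI xi x hconv hxU
  obtain ⟨D, ⟨hDne, hDdir⟩, hlb, hDconv⟩ := hconv
  apply h I r hI xi x ?_ hxU
  refine ⟨(fun d => ({d} : Set X)) '' D, ⟨hDne.image _, ?_, ?_⟩, ?_, ?_⟩
  · rintro _ ⟨d, -, rfl⟩
    exact Set.finite_singleton d
  · rintro _ ⟨a, haD, rfl⟩ _ ⟨b, hbD, rfl⟩
    obtain ⟨cc, hcD, hac, hbc⟩ := hDdir a haD b hbD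
    refine ⟨{cc}, ⟨cc, hcD, rfl⟩, ?_, ?_⟩
    · rintro z ⟨w, hw, hcz⟩
      cases hw
      exact ⟨a, rfl, sle_trans hac hcz⟩
    · rintro z ⟨w, hw, hcz⟩
      cases hw
      exact ⟨b, rfl, sle_trans hbc hcz⟩
  · rintro _ ⟨d, hdD, rfl⟩
    obtain ⟨k, hk⟩ := hlb d hdD
    exact ⟨Set.finite_singleton d, k, fun i hik => ⟨d, rfl, hk i hik⟩⟩
  · intro V hV hxV
    obtain ⟨d, hdD, hdV⟩ := hDconv V hV hxV
    refine ⟨{d}, ⟨d, hdD, rfl⟩, ?_⟩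
    rintro z ⟨w, hw, hdz⟩
    cases hw
    exact hdz V hV hdV

lemma sOpen_dirOpen {T : Set (Set X)} {U : Set X} (h : SOpen T U) : DirOpen T U := by
  rintro D x ⟨hDne, hDdir⟩ hconv hxU
  obtain ⟨d₀, hd₀⟩ := hDne
  have hEv := h {d : X // d ∈ D} (fun a b => sle T a.1 b.1)
    ⟨⟨⟨d₀, hd₀⟩⟩, fun i => sle_refl T i.1, fun a b c hab hbc => sle_trans hab hbc,
      fun a b => by
        obtain ⟨cc, hcD, hac, hbc⟩ := hDdir a.1 a.2 b.1 b.2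
        exact ⟨⟨cc, hcD⟩, hac, hbc⟩⟩
    (fun a => a.1) x
    ⟨D, ⟨⟨d₀, hd₀⟩, hDdir⟩, fun d hd => ⟨⟨d, hd⟩, fun i hi => hi⟩, hconv⟩ hxU
  obtain ⟨k, hk⟩ := hEv
  exact ⟨k.1, k.2, hk k (sle_refl T k.1)⟩

lemma dirOpen_sOpen {T : Set (Set X)} {U : Set X} (hU : DirOpen T U) : SOpen T U := by
  intro I r hI xi x hconv hxU
  obtain ⟨D, hDdirset, hlb, hDconv⟩ := hconv
  obtain ⟨d, hdD, hdU⟩ := hU D x hDdirset hDconv hxU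
  obtain ⟨k, hk⟩ := hlb d hdD
  exact ⟨k, fun i hik => dirOpen_upper hU hdU (hk i hik)⟩

lemma dirOpen_qsOpen {T : Set (Set X)} {U : Set X} (hU : DirOpen T U) : QSOpen T U := by
  intro I r hI xi x hconv hxU
  by_contra hev
  obtain ⟨F, ⟨hFne, hFfin, hFdir⟩, hqlb, hfam⟩ := hconv
  unfold EvIn at hev
  push_neg at hev
  have hANe : ∀ A ∈ F, (A \ U).Nonempty := by
    intro A hA
    obtain ⟨k, hk⟩ := (hqlb A hA).2
    obtain ⟨i, hik, hiU⟩ := hev k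
    obtain ⟨a, haA, hale⟩ := hk i hik
    exact ⟨a, haA, fun haU => hiU (dirOpen_upper hU haU hale)⟩
  have hDiff : ∀ A ∈ F, ∀ c ∈ A \ U,
      ∀ B ∈ F, upset T A ⊆ upset T B → ∃ b ∈ B \ U, sle T b c := by
    intro A hA c hc B hB hsub
    obtain ⟨b, hbB, hbc⟩ := hsub ⟨c, hc.1, sle_refl T c⟩
    exact ⟨b, ⟨hbB, fun hbU => hc.2 (dirOpen_upper hU hbU hbc)⟩, hbc⟩
  obtain ⟨M, hMsub, hMne, hMdir, hMint⟩ :=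
    rudin T (G := (fun A => A \ U) '' F) (hFne.image _)
      (by rintro _ ⟨A, hA, rfl⟩; exact (hFfin A hA).diff)
      (by rintro _ ⟨A, hA, rfl⟩; exact hANe A hA)
      (by
        rintro _ ⟨A, hA, rfl⟩ _ ⟨B, hB, rfl⟩
        obtain ⟨C, hC, hCA, hCB⟩ := hFdir A hA B hB
        refine ⟨C \ U, ⟨C, hC, rfl⟩, ?_, ?_⟩
        · exact fun c hc => hDiff C hC c hc A hA hCA
        · exact fun c hc => hDiff C hC c hc B hB hCB)
  have hDconv : DConv T M x := by
    intro V hV hxV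
    obtain ⟨A, hA, hup⟩ := hfam V hV hxV
    obtain ⟨m, hmM, hmA⟩ := hMint (A \ U) ⟨A, hA, rfl⟩
    exact ⟨m, hmM, hup ⟨m, hmA.1, sle_refl T m⟩⟩
  obtain ⟨m, hmM, hmU⟩ := hU M x ⟨hMne, hMdir⟩ hDconv hxU
  obtain ⟨_, ⟨A, hA, rfl⟩, hmA⟩ := hMsub hmM
  exact hmA.2 hmU

end Aux

theorem stmt12 (X : Type) [TopologicalSpace X] [T0Space X] :
    ∀ U : Set X, (QSOpen (opens X) U ↔ SOpen (opens X) U) ∧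
      (SOpen (opens X) U ↔ DirOpen (opens X) U) := by
  intro U
  exact ⟨⟨fun h => qsOpen_sOpen h, fun h => dirOpen_qsOpen (sOpen_dirOpen h)⟩,
    ⟨fun h => sOpen_dirOpen h, fun h => dirOpen_sOpen h⟩⟩

end Conv
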